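/- Let S be a finite p-group for odd p. Then the index |J(S)𝔛(S) : 𝔛(S)| is not equal to p. -/

import Mathlib

/-- Iterated commutator of subgroups: `[A,B;0] = A`, `[A,B;k+1] = ⁅[A,B;k], B⁆`,
so `[A,B;1] = ⁅A,B⁆` and `[A,B;k] = [[A,B;k-1],B]`. -/
def iterCommutator {G : Type*} [Group G] (A B : Subgroup G) : ℕ → Subgroup G
  | 0 => A
  | k + 1 => ⁅iterCommutator A B k, B⁆

/-- `Ω₁(P)`: the subgroup generated by the elements of `P` of order dividing `p`. -/
def Omega1 {G : Type*} [Group G] (p : ℕ) (P : Subgroup G) : Subgroup G :=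
  Subgroup.closure {x | x ∈ P ∧ x ^ p = 1}

/-- Oliver's condition (∗) for a chain `⊥ = Q 0 ≤ Q 1 ≤ ⋯ ≤ Q n` of normal subgroups:
`[Ω₁(C_G(Q i)), Q (i+1); p-1] = 1` for all `i < n`. -/
def IsOliverChain {G : Type*} [Group G] (p : ℕ) (Q : ℕ → Subgroup G) (n : ℕ) : Prop :=
  Q 0 = ⊥ ∧ (∀ i < n, Q i ≤ Q (i + 1)) ∧ (∀ i ≤ n, (Q i).Normal) ∧
    ∀ i < n,
      iterCommutator (Omega1 p (Subgroup.centralizer (Q i : Set G))) (Q (i + 1)) (p - 1) = ⊥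

/-- A (normal) subgroup `K` admits a chain witnessing Oliver's condition (∗). -/
def HasOliverChain {G : Type*} [Group G] (p : ℕ) (K : Subgroup G) : Prop :=
  ∃ n Q, IsOliverChain p Q n ∧ Q n = K

/-- The Oliver subgroup `𝔛(G)`: the largest normal subgroup of `G` admitting a chain of
`G`-normal subgroups satisfying Oliver's condition (∗). -/
def OliverSubgroup (p : ℕ) (G : Type*) [Group G] : Subgroup G :=
  sSup {K | HasOliverChain p K}

/-- `E` is an elementary abelian `p`-subgroup. -/
def IsElemAbelian {G : Type*} [Group G] (p : ℕ) (E : Subgroup G) : Prop :=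
  (∀ a ∈ E, ∀ b ∈ E, a * b = b * a) ∧ ∀ x ∈ E, x ^ p = 1

/-- The rank of a finite elementary abelian `p`-subgroup `E` (so `|E| = p ^ elemRank p E`). -/
noncomputable def elemRank {G : Type*} [Group G] (p : ℕ) (E : Subgroup G) : ℕ :=
  (Nat.card E).factorization p

/-- The `p`-rank of `G`: the maximal rank of an elementary abelian `p`-subgroup. -/
noncomputable def pRank (p : ℕ) (G : Type*) [Group G] : ℕ :=
  sSup {n | ∃ E : Subgroup G, IsElemAbelian p E ∧ elemRank p E = n}

/-- The Thompson subgroup `J(G)`, generated by all elementary abelian `p`-subgroups of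
rank equal to the `p`-rank of `G`. -/
def Thompson (p : ℕ) (G : Type*) [Group G] : Subgroup G :=
  sSup {E | IsElemAbelian p E ∧ elemRank p E = pRank p G}

open scoped commutatorElement

namespace Oliver
open Subgroup

variable {G : Type*} [Group G]

lemma comm_mul (a x y : G) : ⁅a, x*y⁆ = ⁅a,x⁆ * (x * ⁅a,y⁆ * x⁻¹) := by
  simp only [commutatorElement_def]; group

lemma comm_inv (a x : G) : ⁅a, x⁻¹⁆ = x⁻¹ * ⁅a,x⁆⁻¹ * x := by
  simp only [commutatorElement_def]; group

/-- Key lemma: commutator of `A` with a closure is controlled by a target subgroup `N`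
that contains the commutators with generators and is stable under conjugation by
the generators. -/
lemma key_commutator_le {A N : Subgroup G} {s : Set G}
    (hgen : ∀ x ∈ s, (∀ a ∈ A, ⁅a, x⁆ ∈ N) ∧ (∀ f ∈ N, x * f * x⁻¹ ∈ N) ∧
      (∀ f ∈ N, x⁻¹ * f * x ∈ N)) :
    ⁅A, Subgroup.closure s⁆ ≤ N := by
  rw [Subgroup.commutator_le]
  intro a ha y hy
  suffices h : (∀ a ∈ A, ⁅a, y⁆ ∈ N) ∧ (∀ f ∈ N, y * f * y⁻¹ ∈ N) ∧
      (∀ f ∈ N, y⁻¹ * f * y ∈ N) from h.1 a ha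
  induction hy using Subgroup.closure_induction with
  | mem x hx => exact hgen x hx
  | one =>
    refine ⟨fun a _ => by simpa using one_mem N, fun f hf => by simpa using hf,
      fun f hf => by simpa using hf⟩
  | mul x y hx hy ihx ihy =>
    refine ⟨fun a ha => ?_, fun f hf => ?_, fun f hf => ?_⟩
    · rw [comm_mul]
      exact mul_mem (ihx.1 a ha) (ihx.2.1 _ (ihy.1 a ha))
    · have h1 : (x*y) * f * (x*y)⁻¹ = x * (y * f * y⁻¹) * x⁻¹ := by group
      rw [h1]; exact ihx.2.1 _ (ihy.2.1 f hf)
    · have h1 : (x*y)⁻¹ * f * (x*y) = y⁻¹ * (x⁻¹ * f * x) * y := by group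
      rw [h1]; exact ihy.2.2 _ (ihx.2.2 f hf)
  | inv x hx ih =>
    refine ⟨fun a ha => ?_, fun f hf => ?_, fun f hf => ?_⟩
    · rw [comm_inv]
      exact ih.2.2 _ (inv_mem (ih.1 a ha))
    · have h1 : x⁻¹ * f * x⁻¹⁻¹ = x⁻¹ * f * x := by group
      rw [h1]; exact ih.2.2 f hf
    · have h1 : x⁻¹⁻¹ * f * x⁻¹ = x * f * x⁻¹ := by group
      rw [h1]; exact ih.2.1 f hf

lemma commutator_closure_le_of_normal {A N : Subgroup G} (hN : N.Normal) {s : Set G}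
    (h : ∀ x ∈ s, ∀ a ∈ A, ⁅a, x⁆ ∈ N) : ⁅A, Subgroup.closure s⁆ ≤ N :=
  key_commutator_le fun x hx => ⟨h x hx, fun f hf => hN.conj_mem f hf x,
    fun f hf => by simpa using hN.conj_mem f hf x⁻¹⟩

lemma iter_mono {A A' B : Subgroup G} (h : A ≤ A') :
    ∀ k, iterCommutator A B k ≤ iterCommutator A' B k
  | 0 => h
  | (k+1) => Subgroup.commutator_mono (iter_mono h k) le_rfl

lemma iter_eq_bot_of_le {A B : Subgroup G} {j : ℕ} (h : iterCommutator A B j = ⊥) {k : ℕ}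
    (hjk : j ≤ k) : iterCommutator A B k = ⊥ := by
  induction k with
  | zero => rw [Nat.le_zero.mp hjk] at h; exact h
  | succ k ih =>
    rcases Nat.lt_or_ge j (k+1) with h1 | h2
    · have h3 := ih (Nat.lt_succ_iff.mp h1)
      show ⁅iterCommutator A B k, B⁆ = ⊥
      rw [h3, Subgroup.commutator_bot_left]
    · rwa [← le_antisymm hjk h2]

lemma iter_normal {A B : Subgroup G} (hA : A.Normal) (hB : B.Normal) :
    ∀ k, (iterCommutator A B k).Normal
  | 0 => hA
  | (k+1) => by
    haveI := iter_normal hA hB k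
    haveI := hB
    exact Subgroup.commutator_normal _ _

lemma Omega1_le (p : ℕ) (P : Subgroup G) : Omega1 p P ≤ P :=
  (Subgroup.closure_le _).2 fun _ hx => hx.1

lemma Omega1_mono (p : ℕ) {P Q : Subgroup G} (h : P ≤ Q) : Omega1 p P ≤ Omega1 p Q :=
  Subgroup.closure_mono fun _ hx => ⟨h hx.1, hx.2⟩

lemma closure_conj_normal {s : Set G} (h : ∀ g : G, ∀ x ∈ s, g * x * g⁻¹ ∈ Subgroup.closure s) :
    (Subgroup.closure s).Normal := by
  constructor
  intro n hn g
  induction hn using Subgroup.closure_induction with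
  | mem x hx => exact h g x hx
  | one => simpa using one_mem _
  | mul x y hx hy ihx ihy =>
    have h1 : g*(x*y)*g⁻¹ = (g*x*g⁻¹)*(g*y*g⁻¹) := by group
    rw [h1]; exact mul_mem ihx ihy
  | inv x hx ih =>
    have h1 : g*x⁻¹*g⁻¹ = (g*x*g⁻¹)⁻¹ := by group
    rw [h1]; exact inv_mem ih

lemma Omega1_normal (p : ℕ) {P : Subgroup G} (hP : P.Normal) : (Omega1 p P).Normal := by
  apply closure_conj_normal
  intro g x hx
  apply Subgroup.subset_closure
  refine ⟨hP.conj_mem x hx.1 g, ?_⟩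
  have h1 : (g*x*g⁻¹)^p = g*x^p*g⁻¹ := by rw [conj_pow]
  rw [h1, hx.2]; group

lemma centralizer_normal {P : Subgroup G} (hP : P.Normal) :
    (centralizer (P : Set G)).Normal := by
  constructor
  intro n hn g
  rw [Subgroup.mem_centralizer_iff] at hn ⊢
  intro h hh
  have hmem : g⁻¹ * h * g ∈ P := by simpa using hP.conj_mem h hh g⁻¹
  have h1 := hn (g⁻¹ * h * g) hmem
  calc h * (g*n*g⁻¹) = g*((g⁻¹*h*g)*n)*g⁻¹ := by group
    _ = g*(n*(g⁻¹*h*g))*g⁻¹ := by rw [h1]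
    _ = (g*n*g⁻¹)*h := by group

lemma closure_comm {s : Set G} (h : ∀ x ∈ s, ∀ y ∈ s, x*y = y*x) :
    ∀ a ∈ Subgroup.closure s, ∀ b ∈ Subgroup.closure s, a*b = b*a := by
  have h1 : Subgroup.closure s ≤ centralizer s :=
    (Subgroup.closure_le _).2 fun x hx => Subgroup.mem_centralizer_iff.2 fun y hy => h y hy x hx
  intro a ha b hb
  have h2 : Subgroup.closure s ≤ centralizer {a} := by
    apply (Subgroup.closure_le _).2
    intro x hx
    rw [SetLike.mem_coe, Subgroup.mem_centralizer_iff]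
    rintro y rfl
    exact (Subgroup.mem_centralizer_iff.1 (h1 ha) x hx).symm
  exact Subgroup.mem_centralizer_iff.1 (h2 hb) a rfl

lemma closure_pow {p : ℕ} {s : Set G} (hcomm : ∀ x ∈ s, ∀ y ∈ s, x*y = y*x)
    (hpow : ∀ x ∈ s, x^p = 1) : ∀ a ∈ Subgroup.closure s, a^p = 1 := by
  intro a ha
  induction ha using Subgroup.closure_induction with
  | mem x hx => exact hpow x hx
  | one => exact one_pow p
  | mul x y hx hy ihx ihy =>
    have hc : Commute x y := closure_comm hcomm x hx y hy
    rw [hc.mul_pow, ihx, ihy, one_mul]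
  | inv x hx ih => rw [inv_pow, ih, inv_one]

lemma normal_of_comm {A : Subgroup G} (hA : ∀ a ∈ A, ∀ b ∈ A, a*b = b*a)
    (W : Subgroup ↥A) : W.Normal := by
  constructor
  intro n hn g
  have h1 : g * n * g⁻¹ = n := by
    have := hA g g.2 n n.2
    ext
    push_cast
    rw [this]; group
  rw [h1]; exact hn


section Chains
open Subgroup
variable {G : Type*} [Group G] {p : ℕ}

lemma hasOliverChain_bot : HasOliverChain p (⊥ : Subgroup G) :=
  ⟨0, fun _ => ⊥, ⟨rfl, fun i hi => absurd hi (Nat.not_lt_zero i),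
    fun _ _ => inferInstance, fun i hi => absurd hi (Nat.not_lt_zero i)⟩, rfl⟩

lemma normal_of_hasOliverChain {K : Subgroup G} (h : HasOliverChain p K) : K.Normal := by
  obtain ⟨n, Q, hQ, rfl⟩ := h
  exact hQ.2.2.1 n le_rfl

lemma hasOliverChain_extend {K R : Subgroup G} (hK : HasOliverChain p K) (hKR : K ≤ R)
    (hR : R.Normal)
    (hcomm : iterCommutator (Omega1 p (centralizer (K : Set G))) R (p-1) = ⊥) :
    HasOliverChain p R := by
  obtain ⟨n, Q, ⟨h0, hmono, hnorm, hcond⟩, hQn⟩ := hK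
  refine ⟨n+1, fun i => if i ≤ n then Q i else R, ⟨?_, ?_, ?_, ?_⟩, ?_⟩
  · simp only [Nat.zero_le, if_pos]; exact h0
  · intro i hi
    by_cases h1 : i + 1 ≤ n
    · simp only [Nat.le_of_succ_le h1, if_pos, h1]
      exact hmono i h1
    · have h2 : i = n := by omega
      subst h2
      simp only [le_refl, if_pos, if_neg h1, hQn]
      exact hKR
  · intro i hi
    by_cases h1 : i ≤ n
    · simpa only [if_pos h1] using hnorm i h1
    · simpa only [if_neg h1] using hR
  · intro i hi
    by_cases h1 : i + 1 ≤ n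
    · have h0' : i ≤ n := by omega
      simpa only [if_pos h0', if_pos h1] using hcond i h1
    · have h2 : i = n := by omega
      subst h2
      simpa only [le_refl, if_pos, if_neg h1, hQn] using hcomm
  · show (if n+1 ≤ n then Q (n+1) else R) = R
    rw [if_neg (Nat.not_succ_le_self n)]

lemma iter_sup_le {X K B : Subgroup G} (hX : X.Normal) (hB : B.Normal)
    (hXK : X ≤ centralizer (K : Set G)) :
    ∀ k, iterCommutator X (K ⊔ B) k ≤ iterCommutator X B k ⊓ X
  | 0 => le_inf le_rfl le_rfl
  | (k+1) => by
    have ih := iter_sup_le hX hB hXK k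
    haveI hYnorm : (iterCommutator X B (k+1)).Normal := iter_normal hX hB (k+1)
    haveI hN : ((iterCommutator X B (k+1)) ⊓ X).Normal := inferInstance
    have hcl : K ⊔ B = Subgroup.closure ((K : Set G) ∪ (B : Set G)) := by
      rw [Subgroup.closure_union, Subgroup.closure_eq, Subgroup.closure_eq]
    show ⁅iterCommutator X (K ⊔ B) k, K ⊔ B⁆ ≤ _
    refine le_trans (Subgroup.commutator_mono ih le_rfl) ?_
    rw [hcl]
    apply commutator_closure_le_of_normal hN
    rintro x (hxK | hxB) a ha
    · have h1 : ⁅a, x⁆ = 1 := by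
        rw [commutatorElement_eq_one_iff_mul_comm]
        exact (Subgroup.mem_centralizer_iff.1 (hXK ha.2) x hxK).symm
      rw [h1]; exact one_mem _
    · constructor
      · exact Subgroup.commutator_mem_commutator ha.1 hxB
      · have h1 : ⁅a, x⁆ = a * (x * a⁻¹ * x⁻¹) := by
          rw [commutatorElement_def]; group
        rw [h1]
        exact mul_mem ha.2 (hX.conj_mem a⁻¹ (inv_mem ha.2) x)

lemma hasOliverChain_sup {K1 K2 : Subgroup G} (h1 : HasOliverChain p K1)
    (h2 : HasOliverChain p K2) : HasOliverChain p (K1 ⊔ K2) := by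
  obtain ⟨n, Q, ⟨hQ0, hQmono, hQnorm, hQcond⟩, hQn⟩ := h1
  obtain ⟨m, R, ⟨hR0, hRmono, hRnorm, hRcond⟩, hRm⟩ := h2
  haveI hK1n : K1.Normal := hQn ▸ hQnorm n le_rfl
  set P : ℕ → Subgroup G := fun i => if i ≤ n then Q i else K1 ⊔ R (i - n) with hPdef
  have hP : ∀ j, P (n+j) = K1 ⊔ R j := by
    intro j
    cases j with
    | zero => simp [hPdef, hQn, hR0]
    | succ j =>
      have : ¬ (n + (j+1) ≤ n) := by omega
      simp only [hPdef, if_neg this, Nat.add_sub_cancel_left]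
  refine ⟨n+m, P, ⟨?_, ?_, ?_, ?_⟩, ?_⟩
  · simp only [hPdef, Nat.zero_le, if_pos]; exact hQ0
  · intro i hi
    by_cases hc : i + 1 ≤ n
    · simp only [hPdef, Nat.le_of_succ_le hc, if_pos, hc]
      exact hQmono i hc
    · have hPi : P i = K1 ⊔ R (i-n) := by
        have hj : i = n + (i - n) := by omega
        conv_lhs => rw [hj]
        exact hP (i-n)
      have hPi1 : P (i+1) = K1 ⊔ R ((i-n)+1) := by
        have hj1 : i + 1 = n + ((i - n) + 1) := by omega
        conv_lhs => rw [hj1]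
        exact hP ((i-n)+1)
      rw [hPi, hPi1]
      exact sup_le_sup_left (hRmono (i-n) (by omega)) K1
  · intro i hi
    by_cases hc : i ≤ n
    · simpa only [hPdef, if_pos hc] using hQnorm i hc
    · haveI := hRnorm (i-n) (by omega)
      simp only [hPdef, if_neg hc]
      infer_instance
  · intro i hi
    by_cases hc : i + 1 ≤ n
    · simp only [hPdef, Nat.le_of_succ_le hc, if_pos, hc]
      exact hQcond i hc
    · set j := i - n with hjdef
      have hjm : j < m := by omega
      have hPi : P i = K1 ⊔ R j := by
        have hj : i = n + j := by omega
        conv_lhs => rw [hj]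
        exact hP j
      have hPi1 : P (i+1) = K1 ⊔ R (j+1) := by
        have hj1 : i + 1 = n + (j + 1) := by omega
        conv_lhs => rw [hj1]
        exact hP (j+1)
      rw [hPi, hPi1]
      haveI hRjn : (R j).Normal := hRnorm j (by omega)
      haveI hRj1n : (R (j+1)).Normal := hRnorm (j+1) (by omega)
      haveI hKRn : (K1 ⊔ R j).Normal := inferInstance
      set X := Omega1 p (centralizer ((K1 ⊔ R j : Subgroup G) : Set G)) with hX
      haveI hXn : X.Normal := Omega1_normal p (centralizer_normal hKRn)
      have hXC : X ≤ centralizer ((K1 : Subgroup G) : Set G) :=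
        le_trans (Omega1_le _ _) (Subgroup.centralizer_le (by
          intro x hx; exact (le_sup_left : K1 ≤ K1 ⊔ R j) hx))
      have hXm : X ≤ Omega1 p (centralizer ((R j : Subgroup G) : Set G)) :=
        Omega1_mono p (Subgroup.centralizer_le (by
          intro x hx; exact (le_sup_right : R j ≤ K1 ⊔ R j) hx))
      have hmain := iter_sup_le hXn hRj1n hXC (p-1)
      have hbot : iterCommutator X (R (j+1)) (p-1) = ⊥ := by
        have := iter_mono (B := R (j+1)) hXm (p-1)
        rw [hRcond j hjm] at this
        exact le_bot_iff.1 this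
      rw [hbot] at hmain
      exact le_bot_iff.1 (le_trans hmain inf_le_left)
  · have := hP m
    rw [hRm] at this
    exact this

lemma hasOliverChain_oliverSubgroup [Finite G] : HasOliverChain p (OliverSubgroup p G) := by
  have key := Set.Finite.induction_on
    (motive := fun s _ => s ⊆ {K | HasOliverChain p K} → HasOliverChain p (sSup s)) _
    (Set.toFinite {K : Subgroup G | HasOliverChain p K})
    (fun _ => by rw [sSup_empty]; exact hasOliverChain_bot)
    (fun {a t} _ _ ih hsub => by
      rw [sSup_insert]
      exact hasOliverChain_sup (hsub (Set.mem_insert a t))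
        (ih fun x hx => hsub (Set.mem_insert_of_mem a hx)))
  exact key fun _ hx => hx

end Chains

section PGroup
open Subgroup

variable {G : Type*} [Group G] {p : ℕ}

/-- A nontrivial normal subgroup of a finite p-group contains a nontrivial central element. -/
lemma exists_central_of_normal [Finite G] [Fact p.Prime] (hG : IsPGroup p G)
    {N : Subgroup G} (hN : N.Normal) (hnt : N ≠ ⊥) :
    ∃ x : G, x ∈ N ∧ x ≠ 1 ∧ x ∈ Subgroup.center G := by
  haveI := hN
  letI : MulAction G ↥N := MulAction.compHom _ (MulAut.conjNormal : G →* MulAut ↥N)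
  have hsmul : ∀ (g : G) (n : ↥N), ((g • n : ↥N) : G) = g * n * g⁻¹ := fun g n => rfl
  have hmod := hG.card_modEq_card_fixedPoints (α := ↥N)
  have hp : p.Prime := Fact.out
  -- p divides card N
  have hdvd : p ∣ Nat.card ↥N := by
    obtain ⟨k, hk⟩ := (IsPGroup.iff_card).mp (hG.to_subgroup N)
    rcases Nat.eq_zero_or_pos k with hk0 | hkpos
    · exfalso
      apply hnt
      apply Subgroup.eq_bot_of_card_eq
      rw [hk, hk0, pow_zero]
    · rw [hk]
      exact dvd_pow_self p (Nat.pos_iff_ne_zero.mp hkpos)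
  have hdvd2 : p ∣ Nat.card (MulAction.fixedPoints G ↥N) :=
    (Nat.modEq_zero_iff_dvd).mp ((hmod.symm.trans (Nat.modEq_zero_iff_dvd.mpr hdvd)))
  have h1fix : (1 : ↥N) ∈ MulAction.fixedPoints G ↥N := by
    intro g
    ext
    rw [hsmul]
    simp
  haveI : Nonempty (MulAction.fixedPoints G ↥N) := ⟨⟨1, h1fix⟩⟩
  have hpos : 0 < Nat.card (MulAction.fixedPoints G ↥N) := Nat.card_pos
  have hlt : 1 < Nat.card (MulAction.fixedPoints G ↥N) :=
    lt_of_lt_of_le hp.one_lt (Nat.le_of_dvd hpos hdvd2)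
  haveI : Nontrivial (MulAction.fixedPoints G ↥N) := Finite.one_lt_card_iff_nontrivial.mp hlt
  obtain ⟨x, hx⟩ := exists_ne (⟨⟨1, one_mem N⟩, h1fix⟩ : MulAction.fixedPoints G ↥N)
  refine ⟨(x : ↥N), (x : ↥N).2, ?_, ?_⟩
  · intro h
    apply hx
    ext
    exact h
  · rw [Subgroup.mem_center_iff]
    intro g
    have := x.2 g
    have h2 : g * ((x : ↥N) : G) * g⁻¹ = ((x : ↥N) : G) := by
      conv_rhs => rw [← this]
      rw [hsmul]
    calc g * ((x : ↥N) : G) = (g * ((x : ↥N) : G) * g⁻¹) * g := by group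
      _ = ((x : ↥N) : G) * g := by rw [h2]

lemma card_eq_pow_elemRank [Finite G] [Fact p.Prime] (hG : IsPGroup p G) (E : Subgroup G) :
    Nat.card E = p ^ (elemRank p E) := by
  obtain ⟨k, hk⟩ := (IsPGroup.iff_card).mp (hG.to_subgroup E)
  rw [elemRank, hk, Nat.Prime.factorization_pow Fact.out]
  simp

lemma elemRank_le_pRank [Finite G] {E : Subgroup G} (hE : IsElemAbelian p E) :
    elemRank p E ≤ pRank p G := by
  have hmem : elemRank p E ∈ {n | ∃ E' : Subgroup G, IsElemAbelian p E' ∧ elemRank p E' = n} :=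
    ⟨E, hE, rfl⟩
  apply le_csSup _ hmem
  refine ⟨(Nat.card G).factorization p, ?_⟩
  rintro n ⟨E', _, rfl⟩
  have h1 : Nat.card E' ∣ Nat.card G := Subgroup.card_subgroup_dvd_card E'
  have h2 : Nat.card E' ≠ 0 := Nat.card_pos.ne'
  have h3 : Nat.card G ≠ 0 := Nat.card_pos.ne'
  exact (Nat.factorization_le_iff_dvd h2 h3).mpr h1 p

lemma thompson_normal (p : ℕ) (G : Type*) [Group G] : (Thompson p G).Normal := by
  have key : ∀ g : G, Subgroup.map (MulAut.conj g).toMonoidHom (Thompson p G) ≤ Thompson p G := by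
    intro g
    rw [Thompson, (Subgroup.gc_map_comap (MulAut.conj g).toMonoidHom).l_sSup]
    apply iSup_le
    intro E
    apply iSup_le
    intro hE
    apply le_sSup
    obtain ⟨⟨hcomm, hpow⟩, hrank⟩ := hE
    constructor
    · constructor
      · rintro _ ⟨a, ha, rfl⟩ _ ⟨b, hb, rfl⟩
        rw [← map_mul, ← map_mul, hcomm a ha b hb]
      · rintro _ ⟨a, ha, rfl⟩
        rw [← map_pow, hpow a ha, map_one]
    · rw [← hrank]
      unfold elemRank
      have hcard : Nat.card (Subgroup.map (MulAut.conj g).toMonoidHom E) = Nat.card E :=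
        (Nat.card_congr (Subgroup.equivMapOfInjective E (MulAut.conj g).toMonoidHom
          (fun a b h => (MulAut.conj g).injective h)).toEquiv).symm
      rw [hcard]
  constructor
  intro n hn g
  exact key g ⟨n, hn, rfl⟩

end PGroup

section Main
open Subgroup

lemma three_le_of_oddprime {p : ℕ} (hpr : p.Prime) (hp : Odd p) : 3 ≤ p := by
  rcases Nat.lt_or_ge p 3 with h | h
  · interval_cases p
    · exact absurd hpr (by norm_num)
    · exact absurd hpr (by norm_num)
    · exfalso; rw [Nat.odd_iff] at hp; simp at hp
  · exact h

/-- Lemma 2.2: the centralizer of the Oliver subgroup is contained in it. -/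
lemma centralizer_oliver_le (p : ℕ) [Fact p.Prime] (hp : Odd p) {S : Type*} [Group S]
    [Finite S] (hS : IsPGroup p S) :
    centralizer ((OliverSubgroup p S : Subgroup S) : Set S) ≤ OliverSubgroup p S := by
  have hprime : p.Prime := Fact.out
  have hpm : 2 ≤ p - 1 := by have := three_le_of_oddprime hprime hp; omega
  set 𝔛 := OliverSubgroup p S with hXdef
  have hXchain : HasOliverChain p 𝔛 := hasOliverChain_oliverSubgroup
  haveI hXnorm : 𝔛.Normal := normal_of_hasOliverChain hXchain
  by_contra hc
  obtain ⟨c, hcC, hcX⟩ := SetLike.not_le_iff_exists.mp hc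
  haveI hCnorm : (centralizer (𝔛 : Set S)).Normal := centralizer_normal hXnorm
  set Cb : Subgroup (S ⧸ 𝔛) := (centralizer (𝔛 : Set S)).map (QuotientGroup.mk' 𝔛) with hCb
  haveI hCbn : Cb.Normal := hCnorm.map _ (QuotientGroup.mk'_surjective 𝔛)
  have hCbne : Cb ≠ ⊥ := by
    intro h
    have h1 : QuotientGroup.mk' 𝔛 c ∈ Cb := Subgroup.mem_map_of_mem _ hcC
    rw [h, Subgroup.mem_bot] at h1
    exact hcX ((QuotientGroup.eq_one_iff c).mp h1)
  obtain ⟨z, hzC, hz1, hzc⟩ := exists_central_of_normal (hS.to_quotient 𝔛) hCbn hCbne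
  obtain ⟨c₀, hc₀C, hc₀z⟩ := hzC
  have hc₀X : c₀ ∉ 𝔛 := by
    intro h
    apply hz1
    rw [← hc₀z]
    exact (QuotientGroup.eq_one_iff c₀).mpr h
  set R := Subgroup.closure ((𝔛 : Set S) ∪ {c₀}) with hRdef
  have hXR : 𝔛 ≤ R := fun x hx => Subgroup.subset_closure (Or.inl hx)
  have hc₀R : c₀ ∈ R := Subgroup.subset_closure (Or.inr rfl)
  have hcommX : ∀ a : S, ⁅a, c₀⁆ ∈ 𝔛 := by
    intro a
    rw [← QuotientGroup.eq_one_iff ⁅a, c₀⁆]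
    have h1 : ((⁅a, c₀⁆ : S) : S ⧸ 𝔛) = ⁅((a : S) : S ⧸ 𝔛), ((c₀ : S) : S ⧸ 𝔛)⁆ := by
      simp [commutatorElement_def]
    have h2 : ((c₀ : S) : S ⧸ 𝔛) = z := hc₀z
    rw [h1, h2]
    exact commutatorElement_eq_one_iff_mul_comm.mpr (Subgroup.mem_center_iff.mp hzc _)
  have hRnorm : R.Normal := by
    apply closure_conj_normal
    rintro g x (hx | rfl)
    · exact Subgroup.subset_closure (Or.inl (hXnorm.conj_mem x hx g))
    · have h1 : g * x * g⁻¹ = ⁅g, x⁆ * x := by rw [commutatorElement_def]; group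
      rw [h1]
      exact mul_mem (hXR (hcommX g)) hc₀R
  set Ω := Omega1 p (centralizer (𝔛 : Set S)) with hΩdef
  haveI hΩnorm : Ω.Normal := Omega1_normal p hCnorm
  have hΩC : Ω ≤ centralizer (𝔛 : Set S) := Omega1_le _ _
  haveI hXΩn : (𝔛 ⊓ Ω).Normal := inferInstance
  have hY1 : ⁅Ω, R⁆ ≤ 𝔛 ⊓ Ω := by
    rw [hRdef]
    apply commutator_closure_le_of_normal hXΩn
    rintro x (hx | rfl) a ha
    · have h1 : ⁅a, x⁆ = 1 := commutatorElement_eq_one_iff_mul_comm.mpr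
        (Subgroup.mem_centralizer_iff.mp (hΩC ha) x hx).symm
      rw [h1]; exact one_mem _
    · refine ⟨hcommX a, ?_⟩
      have h1 : ⁅a, x⁆ = a * (x * a⁻¹ * x⁻¹) := by rw [commutatorElement_def]; group
      rw [h1]
      exact mul_mem ha (hΩnorm.conj_mem a⁻¹ (inv_mem ha) x)
  have hY2 : ⁅(𝔛 ⊓ Ω : Subgroup S), R⁆ ≤ ⊥ := by
    rw [hRdef]
    apply commutator_closure_le_of_normal (inferInstance : (⊥ : Subgroup S).Normal)
    rintro x (hx | rfl) a ha
    · have h1 : ⁅a, x⁆ = 1 := commutatorElement_eq_one_iff_mul_comm.mpr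
        (Subgroup.mem_centralizer_iff.mp (hΩC ha.2) x hx).symm
      rw [h1]; exact one_mem _
    · have h1 : ⁅a, x⁆ = 1 := commutatorElement_eq_one_iff_mul_comm.mpr
        (Subgroup.mem_centralizer_iff.mp hc₀C a ha.1)
      rw [h1]; exact one_mem _
  have hiter2 : iterCommutator Ω R 2 = ⊥ := by
    apply le_bot_iff.mp
    have e2 : iterCommutator Ω R 2 = ⁅⁅Ω, R⁆, R⁆ := rfl
    rw [e2]
    exact le_trans (Subgroup.commutator_mono hY1 le_rfl) hY2
  have hiterp : iterCommutator Ω R (p-1) = ⊥ := iter_eq_bot_of_le hiter2 hpm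
  have hRchain : HasOliverChain p R := hasOliverChain_extend hXchain hXR hRnorm hiterp
  have hle : R ≤ 𝔛 := le_sSup hRchain
  exact hc₀X (hle hc₀R)

end Main

end Oliver

section Final
open Subgroup Pointwise Oliver

/-- Corollary 3.4: `|J(S)𝔛(S) : 𝔛(S)| ≠ p`. -/
theorem index_ne_p (p : ℕ) [Fact p.Prime] (hp : Odd p)
    (S : Type*) [Group S] [Fintype S] (hS : IsPGroup p S) :
    (OliverSubgroup p S).relIndex (Thompson p S ⊔ OliverSubgroup p S) ≠ p := by
  intro hrel
  have hprime : p.Prime := Fact.out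
  have hpm : 2 ≤ p - 1 := by have := three_le_of_oddprime hprime hp; omega
  set 𝔛 := OliverSubgroup p S with hXdef
  have hXchain : HasOliverChain p 𝔛 := hasOliverChain_oliverSubgroup
  haveI hXnorm : 𝔛.Normal := normal_of_hasOliverChain hXchain
  have hCle : centralizer (𝔛 : Set S) ≤ 𝔛 := centralizer_oliver_le p hp hS
  -- find an elementary abelian subgroup of maximal rank not contained in 𝔛
  have hJX : ¬ Thompson p S ≤ 𝔛 := by
    intro hle
    rw [sup_eq_right.mpr hle, Subgroup.relIndex_self] at hrel
    exact hprime.one_lt.ne hrel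
  obtain ⟨E, hEmem, hEnle⟩ : ∃ E : Subgroup S,
      (IsElemAbelian p E ∧ elemRank p E = pRank p S) ∧ ¬ E ≤ 𝔛 := by
    by_contra h
    push_neg at h
    exact hJX (sSup_le fun E hE => h E hE)
  obtain ⟨⟨hEab, hEpow⟩, hErank⟩ := hEmem
  obtain ⟨e, heE, heX⟩ := SetLike.not_le_iff_exists.mp hEnle
  have hEJ : E ≤ Thompson p S := le_sSup ⟨⟨hEab, hEpow⟩, hErank⟩
  set T := Thompson p S ⊔ 𝔛 with hTdef
  have hET : E ≤ T := le_trans hEJ le_sup_left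
  have heT : e ∈ T := hET heE
  haveI hThN : (Thompson p S).Normal := thompson_normal p S
  haveI hTnorm : T.Normal := inferInstance
  -- T = 𝔛 ⊔ ⟨e⟩
  set R := 𝔛 ⊔ Subgroup.zpowers e with hRdef
  have hXR : 𝔛 ≤ R := le_sup_left
  have heR : e ∈ R := (le_sup_right : Subgroup.zpowers e ≤ R) (Subgroup.mem_zpowers e)
  have hRT : R ≤ T := sup_le le_sup_right (Subgroup.zpowers_le.mpr heT)
  have hTR : T = R := by
    have h1 := Subgroup.relIndex_mul_relIndex 𝔛 R T hXR hRT
    rw [hrel] at h1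
    have h2 : 𝔛.relIndex R ≠ 1 := fun h => heX (Subgroup.relIndex_eq_one.mp h heR)
    have h3 : 𝔛.relIndex R ∣ p := ⟨R.relIndex T, h1.symm⟩
    rcases hprime.eq_one_or_self_of_dvd _ h3 with h4 | h4
    · exact absurd h4 h2
    · rw [h4] at h1
      have h5 : R.relIndex T = 1 :=
        Nat.eq_of_mul_eq_mul_left hprime.pos (by rw [h1, mul_one])
      exact le_antisymm (Subgroup.relIndex_eq_one.mp h5) hRT
  haveI hRnorm : R.Normal := hTR ▸ hTnorm
  -- e facts
  have hep : e ^ p = 1 := hEpow e heE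
  have he1 : e ≠ 1 := fun h => heX (h ▸ one_mem 𝔛)
  -- Ω
  set Ω := Omega1 p (centralizer (𝔛 : Set S)) with hΩdef
  haveI hΩnorm : Ω.Normal := Omega1_normal p (centralizer_normal hXnorm)
  have hΩC : Ω ≤ centralizer (𝔛 : Set S) := Omega1_le _ _
  have hΩX : Ω ≤ 𝔛 := le_trans hΩC hCle
  have hΩcomm : ∀ a ∈ Ω, ∀ b ∈ Ω, a * b = b * a := fun a ha b hb =>
    Subgroup.mem_centralizer_iff.mp (hΩC hb) a (hΩX ha)
  have hΩpow : ∀ a ∈ Ω, a ^ p = 1 := by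
    apply Oliver.closure_pow
    · intro x hx y hy
      exact Subgroup.mem_centralizer_iff.mp hy.1 x (hCle hx.1)
    · exact fun x hx => hx.2
  -- cards
  set m := pRank p S with hm
  have hEcard : Nat.card E = p ^ m := by rw [card_eq_pow_elemRank hS E, hErank]
  set F := E ⊓ 𝔛 with hF
  have hFE : F ≤ E := inf_le_left
  have hFX : F ≤ 𝔛 := inf_le_right
  have heF : e ∉ F := fun h => heX (Subgroup.mem_inf.mp h).2
  have hEsub : (E : Set S) ⊆ (F : Set S) * (Subgroup.zpowers e : Set S) := by
    intro x hx
    have hxR : x ∈ R := hTR ▸ hET hx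
    rw [hRdef] at hxR
    rw [← SetLike.mem_coe, Subgroup.normal_mul] at hxR
    obtain ⟨ξ, hξ, y, hy, rfl⟩ := hxR
    have hyE : y ∈ E := Subgroup.zpowers_le.mpr heE hy
    have hξE : ξ ∈ E := by
      have h1 : ξ = (ξ * y) * y⁻¹ := by group
      rw [h1]; exact mul_mem hx (inv_mem hyE)
    exact Set.mul_mem_mul (Subgroup.mem_inf.mpr ⟨hξE, hξ⟩) hy
  have horde : orderOf e = p := by
    rcases hprime.eq_one_or_self_of_dvd (orderOf e) (orderOf_dvd_of_pow_eq_one hep) with h | h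
    · exact absurd (orderOf_eq_one_iff.mp h) he1
    · exact h
  have hcard1 : Nat.card E ≤ Nat.card F * p := by
    have c1 : Nat.card E = Nat.card ((E : Set S)) :=
      Nat.card_congr (Equiv.subtypeEquivRight fun x => Iff.rfl)
    have c2 : Nat.card ((F : Set S)) = Nat.card F :=
      Nat.card_congr (Equiv.subtypeEquivRight fun x => Iff.rfl)
    have c3 : Nat.card ((Subgroup.zpowers e : Subgroup S) : Set S) = p := by
      rw [← horde, ← Nat.card_zpowers e]
      exact Nat.card_congr (Equiv.subtypeEquivRight fun x => Iff.rfl)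
    calc Nat.card E = Nat.card ((E : Set S)) := c1
      _ ≤ Nat.card (((F : Set S) * (Subgroup.zpowers e : Set S) : Set S)) := by
          rw [Nat.card_coe_set_eq, Nat.card_coe_set_eq]
          exact Set.ncard_le_ncard hEsub (Set.toFinite _)
      _ ≤ Nat.card ((F : Set S)) * Nat.card ((Subgroup.zpowers e : Subgroup S) : Set S) :=
          Set.natCard_mul_le
      _ = Nat.card F * p := by rw [c2, c3]
  obtain ⟨k, hk⟩ : ∃ k, Nat.card F = p ^ k := by
    have h1 : Nat.card F ∣ p ^ m := hEcard ▸ Subgroup.card_dvd_of_le hFE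
    obtain ⟨k, _, hk2⟩ := (Nat.dvd_prime_pow hprime).mp h1
    exact ⟨k, hk2⟩
  have hkm : k + 1 = m := by
    have hklt : k < m := by
      by_contra h
      push_neg at h
      have hge : Nat.card E ≤ Nat.card F := by
        rw [hEcard, hk]
        exact Nat.pow_le_pow_right hprime.pos h
      have hFeq : F = E := Subgroup.eq_of_le_of_card_ge hFE hge
      exact heF (hFeq ▸ heE)
    have hle : m ≤ k + 1 := by
      have h1 := hcard1
      rw [hEcard, hk] at h1
      have h2 : p ^ m ≤ p ^ (k + 1) := by rw [pow_succ]; exact h1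
      exact (Nat.pow_le_pow_iff_right hprime.one_lt).mp h2
    omega
  -- A = F ⊔ Ω is elementary abelian
  set A := Subgroup.closure ((F : Set S) ∪ (Ω : Set S)) with hA
  have hAgencomm : ∀ x ∈ (F : Set S) ∪ (Ω : Set S), ∀ y ∈ (F : Set S) ∪ (Ω : Set S),
      x * y = y * x := by
    rintro x (hx | hx) y (hy | hy)
    · exact hEab x (hFE hx) y (hFE hy)
    · exact Subgroup.mem_centralizer_iff.mp (hΩC hy) x (hFX hx)
    · exact (Subgroup.mem_centralizer_iff.mp (hΩC hx) y (hFX hy)).symm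
    · exact hΩcomm x hx y hy
  have hAcomm : ∀ a ∈ A, ∀ b ∈ A, a * b = b * a := closure_comm hAgencomm
  have hApow : ∀ a ∈ A, a ^ p = 1 := by
    apply Oliver.closure_pow hAgencomm
    rintro x (hx | hx)
    · exact hEpow x (hFE hx)
    · exact hΩpow x hx
  have hAr : elemRank p A ≤ m := elemRank_le_pRank ⟨hAcomm, hApow⟩
  have hAcard : Nat.card A = p ^ elemRank p A := card_eq_pow_elemRank hS A
  have hFA : F ≤ A := fun x hx => Subgroup.subset_closure (Or.inl hx)
  have hΩA : Ω ≤ A := fun x hx => Subgroup.subset_closure (Or.inr hx)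
  -- index of F in A divides p
  set F' := F.subgroupOf A with hF'
  haveI hF'norm : F'.Normal := normal_of_comm hAcomm F'
  have hcardF' : Nat.card F' = p ^ k := by
    rw [← hk]
    exact Nat.card_congr (Subgroup.subgroupOfEquivOfLe hFA).toEquiv
  have hidxF' : F'.index ∣ p := by
    have h1 : F'.index * p ^ k = p ^ elemRank p A := by
      rw [← hcardF', ← hAcard]
      exact Subgroup.index_mul_card F'
    have h2 : F'.index * p ^ k ∣ p * p ^ k := by
      rw [h1]
      calc p ^ elemRank p A ∣ p ^ m := pow_dvd_pow p hAr
        _ = p ^ (k + 1) := by rw [hkm]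
        _ = p * p ^ k := by rw [pow_succ']
    exact (Nat.mul_dvd_mul_iff_right (Nat.pow_pos hprime.pos)).mp h2
  -- relindex of F in Ω divides p
  have hrelFΩ : F.relIndex Ω ∣ p := by
    rw [← Subgroup.relIndex_subgroupOf hΩA]
    set Ω' := Ω.subgroupOf A with hΩ'
    set ψ := (QuotientGroup.mk' F').comp Ω'.subtype with hψ
    have hkerψ : ψ.ker = F'.subgroupOf Ω' := by
      ext x
      rw [MonoidHom.mem_ker, Subgroup.mem_subgroupOf]
      exact QuotientGroup.eq_one_iff _
    have h1 : F'.relIndex Ω' = Nat.card ψ.range := by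
      rw [Subgroup.relIndex, ← hkerψ, Subgroup.index_eq_card]
      exact Nat.card_congr (QuotientGroup.quotientKerEquivRange ψ).toEquiv
    rw [h1]
    refine dvd_trans (Subgroup.card_subgroup_dvd_card ψ.range) ?_
    rw [← Subgroup.index_eq_card]
    exact hidxF'
  -- the homomorphism w ↦ [w, e] on Ω
  have hconjΩ : ∀ g : S, ∀ w ∈ Ω, g * w * g⁻¹ ∈ Ω := fun g w hw => hΩnorm.conj_mem w hw g
  have hhom : ∀ v w : S, v ∈ Ω → w ∈ Ω → ⁅v * w, e⁆ = ⁅v, e⁆ * ⁅w, e⁆ := by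
    intro v w hv hw
    have h1 : ∀ x : S, ⁅x, e⁆ = x * (e * x⁻¹ * e⁻¹) := fun x => by
      rw [commutatorElement_def]; group
    have hb : e * v⁻¹ * e⁻¹ ∈ Ω := hconjΩ e v⁻¹ (inv_mem hv)
    have ha : e * w⁻¹ * e⁻¹ ∈ Ω := hconjΩ e w⁻¹ (inv_mem hw)
    rw [h1 (v * w), h1 v, h1 w]
    have hc1 : (e*v⁻¹*e⁻¹) * w = w * (e*v⁻¹*e⁻¹) := hΩcomm _ hb w hw
    have hc2 : (e*w⁻¹*e⁻¹) * (e*v⁻¹*e⁻¹) = (e*v⁻¹*e⁻¹) * (e*w⁻¹*e⁻¹) := hΩcomm _ ha _ hb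
    calc v*w*(e*(v*w)⁻¹*e⁻¹) = v*(w*((e*w⁻¹*e⁻¹)*(e*v⁻¹*e⁻¹))) := by group
      _ = v*(w*((e*v⁻¹*e⁻¹)*(e*w⁻¹*e⁻¹))) := by rw [hc2]
      _ = v*((w*(e*v⁻¹*e⁻¹))*(e*w⁻¹*e⁻¹)) := by rw [← mul_assoc w]
      _ = v*(((e*v⁻¹*e⁻¹)*w)*(e*w⁻¹*e⁻¹)) := by rw [← hc1]
      _ = v*(e*v⁻¹*e⁻¹)*(w*(e*w⁻¹*e⁻¹)) := by group
  set φ : ↥Ω →* S := MonoidHom.mk' (fun w => ⁅(w : S), e⁆)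
    (fun v w => hhom v w v.2 w.2) with hφ
  set Φ := φ.range with hΦ
  have hΦΩ : Φ ≤ Ω := by
    rintro x ⟨w, rfl⟩
    show ⁅(w : S), e⁆ ∈ Ω
    have h1 : ⁅(w : S), e⁆ = (w : S) * (e * (w : S)⁻¹ * e⁻¹) := by
      rw [commutatorElement_def]; group
    rw [h1]
    exact mul_mem w.2 (hconjΩ e _ (inv_mem w.2))
  have hΦcard : Nat.card Φ ∣ p := by
    have h1 : Nat.card Φ = φ.ker.index := by
      rw [Subgroup.index_eq_card]
      exact (Nat.card_congr (QuotientGroup.quotientKerEquivRange φ).toEquiv).symm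
    rw [h1]
    have h2 : F.subgroupOf Ω ≤ φ.ker := by
      intro w hw
      rw [Subgroup.mem_subgroupOf] at hw
      rw [MonoidHom.mem_ker]
      show ⁅(w : S), e⁆ = 1
      exact commutatorElement_eq_one_iff_mul_comm.mpr (hEab _ (hFE hw) e heE)
    exact dvd_trans (Subgroup.index_dvd_of_le h2) hrelFΩ
  -- Φ is stable under conjugation by e
  have hσΦ : ∀ f ∈ Φ, e * f * e⁻¹ ∈ Φ := by
    rintro _ ⟨w, rfl⟩
    refine ⟨⟨e * (w : S) * e⁻¹, hconjΩ e _ w.2⟩, ?_⟩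
    show ⁅e * (w : S) * e⁻¹, e⁆ = e * ⁅(w : S), e⁆ * e⁻¹
    simp only [commutatorElement_def]; group
  have hσ'Φ : ∀ f ∈ Φ, e⁻¹ * f * e ∈ Φ := by
    rintro _ ⟨w, rfl⟩
    refine ⟨⟨e⁻¹ * (w : S) * e, by simpa using hconjΩ e⁻¹ _ w.2⟩, ?_⟩
    show ⁅e⁻¹ * (w : S) * e, e⁆ = e⁻¹ * ⁅(w : S), e⁆ * e
    simp only [commutatorElement_def]; group
  -- Φ is centralized by e
  have hΦcent : ∀ f ∈ Φ, e * f * e⁻¹ = f := by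
    intro f hf
    by_cases hf1 : f = 1
    · rw [hf1]; group
    · have hof : orderOf f = p := by
        have h1 : orderOf f ∣ p := dvd_trans (Subgroup.orderOf_dvd_natCard Φ hf) hΦcard
        rcases hprime.eq_one_or_self_of_dvd _ h1 with h | h
        · exact absurd (orderOf_eq_one_iff.mp h) hf1
        · exact h
      have hzsub : Subgroup.zpowers f ≤ Φ := Subgroup.zpowers_le.mpr hf
      have hcard_le : Nat.card Φ ≤ Nat.card (Subgroup.zpowers f) := by
        rw [Nat.card_zpowers, hof]
        exact Nat.le_of_dvd hprime.pos hΦcard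
      have hΦz : Subgroup.zpowers f = Φ := Subgroup.eq_of_le_of_card_ge hzsub hcard_le
      obtain ⟨kz, hkz⟩ := Subgroup.mem_zpowers_iff.mp (hΦz ▸ hσΦ f hf)
      have hiter : ∀ j : ℕ, e ^ j * f * (e ^ j)⁻¹ = f ^ (kz ^ j) := by
        intro j
        induction j with
        | zero => simp
        | succ j ih =>
          have h1 : e ^ (j+1) * f * (e ^ (j+1))⁻¹ = e * (e ^ j * f * (e ^ j)⁻¹) * e⁻¹ := by
            rw [pow_succ']; group
          rw [h1, ih]
          calc e * f ^ (kz ^ j) * e⁻¹ = (e * f * e⁻¹) ^ (kz ^ j) := by rw [conj_zpow]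
            _ = (f ^ kz) ^ (kz ^ j) := by rw [← hkz]
            _ = f ^ (kz * kz ^ j) := by rw [← zpow_mul]
            _ = f ^ (kz ^ (j + 1)) := by rw [← pow_succ']
      have hp_iter := hiter p
      rw [hep] at hp_iter
      have hfp : f = f ^ (kz ^ p) := by simpa using hp_iter
      have hd1 : ((p : ℤ)) ∣ kz ^ p - 1 := by
        have h5 : f ^ (kz ^ p - 1) = 1 := by
          rw [zpow_sub, zpow_one, ← hfp]
          simp
        have h6 := orderOf_dvd_iff_zpow_eq_one.mpr h5
        rwa [hof] at h6
      have hd2 : ((p : ℤ)) ∣ kz ^ p - kz := by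
        have h7 : ((kz ^ p - kz : ℤ) : ZMod p) = 0 := by
          push_cast
          rw [ZMod.pow_card]
          ring
        exact (ZMod.intCast_zmod_eq_zero_iff_dvd _ p).mp h7
      have hd3 : ((p : ℤ)) ∣ kz - 1 := by
        have h8 := dvd_sub hd1 hd2
        have h9 : (kz ^ p - 1) - (kz ^ p - kz) = kz - 1 := by ring
        rwa [h9] at h8
      have h10 : f ^ (kz - 1) = 1 := orderOf_dvd_iff_zpow_eq_one.mp (by rw [hof]; exact hd3)
      rw [← hkz]
      calc f ^ kz = f ^ (1 + (kz - 1)) := by norm_num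
        _ = f * f ^ (kz - 1) := by rw [zpow_add, zpow_one]
        _ = f := by rw [h10, mul_one]
  -- final commutator computation
  have hY1 : ⁅Ω, Subgroup.closure ((𝔛 : Set S) ∪ {e})⁆ ≤ Φ := by
    apply key_commutator_le
    rintro x (hx | rfl)
    · refine ⟨?_, ?_, ?_⟩
      · intro a ha
        have h1 : ⁅a, x⁆ = 1 := commutatorElement_eq_one_iff_mul_comm.mpr
          (Subgroup.mem_centralizer_iff.mp (hΩC ha) x hx).symm
        rw [h1]; exact one_mem Φ
      · intro f hf
        have h2 := Subgroup.mem_centralizer_iff.mp (hΩC (hΦΩ hf)) x hx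
        have h3 : x * f * x⁻¹ = f := by rw [h2]; group
        rw [h3]; exact hf
      · intro f hf
        have h2 := Subgroup.mem_centralizer_iff.mp (hΩC (hΦΩ hf)) x hx
        have h3 : x⁻¹ * f * x = f := by rw [mul_assoc, ← h2]; group
        rw [h3]; exact hf
    · refine ⟨?_, hσΦ, hσ'Φ⟩
      intro a ha
      exact ⟨⟨a, ha⟩, rfl⟩
  have hY2 : ⁅Φ, Subgroup.closure ((𝔛 : Set S) ∪ {e})⁆ ≤ ⊥ := by
    apply commutator_closure_le_of_normal (inferInstance : (⊥ : Subgroup S).Normal)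
    rintro x (hx | rfl) f hf
    · have h1 : ⁅f, x⁆ = 1 := commutatorElement_eq_one_iff_mul_comm.mpr
        (Subgroup.mem_centralizer_iff.mp (hΩC (hΦΩ hf)) x hx).symm
      rw [h1]; exact one_mem ⊥
    · have h2 := hΦcent f hf
      have h1 : ⁅f, x⁆ = 1 := by
        rw [commutatorElement_eq_one_iff_mul_comm]
        calc f * x = (x * f * x⁻¹) * x := by rw [h2]
          _ = x * f := by group
      rw [h1]; exact one_mem ⊥
  have hclT : Subgroup.closure ((𝔛 : Set S) ∪ {e}) = T := by
    rw [Subgroup.closure_union, Subgroup.closure_eq, ← Subgroup.zpowers_eq_closure,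
      ← hRdef, ← hTR]
  have hiter2 : iterCommutator Ω T 2 = ⊥ := by
    apply le_bot_iff.mp
    have e2 : iterCommutator Ω T 2 = ⁅⁅Ω, T⁆, T⁆ := rfl
    rw [e2, ← hclT]
    exact le_trans (Subgroup.commutator_mono hY1 le_rfl) hY2
  have hiterp : iterCommutator Ω T (p - 1) = ⊥ := iter_eq_bot_of_le hiter2 hpm
  have hTchain : HasOliverChain p T := hasOliverChain_extend hXchain le_sup_right hTnorm hiterp
  have hle : T ≤ 𝔛 := le_sSup hTchain
  exact heX (hle heT)

end Final
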